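/- In the Lie algebra gl₂(ℂ) of complex 2×2 matrices with the commutator bracket, let e = E₁₂, f = E₂₁, and h = (i/2)(E₁₁ − E₂₂) (Eᵢⱼ the elementary matrices). Then for every α ∈ ℂ, the bracket [e + α·h, f + conj(α)·h] lies in the ℂ-linear span of {e + α·h, f + conj(α)·h, 1₂} (1₂ the identity matrix) if and only if |α| = 1. (This is the computation in Step 1 of the proof of Theorem 6.1: under the identification of the degree-0 part of the complexified contact algebra of degree 1 with gl₂(ℂ), with z² ↦ e, z̄² ↦ f, z z̄ ↦ h and the grading element E ↦ a multiple of 1₂, the subspace ⟨E, z² + α z z̄, z̄² + ᾱ z z̄⟩ is a Lie subalgebra exactly when α = e^{iθ} is unimodular, in which case it is a Borel subalgebra.) -/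

import Mathlib

/-!
STATEMENT 17 (Step 1 of the proof of Theorem 6.1 of the paper):
In `gl₂(ℂ)` with `e = E₁₂`, `f = E₂₁`, `h = (i/2)(E₁₁ − E₂₂)`, the bracket
`[e + α·h, f + ᾱ·h]` lies in the span of `{e + α·h, f + ᾱ·h, 1}` iff `|α| = 1`.
-/

open Matrix

noncomputable section

/-- `e = E₁₂`. -/
def e : Matrix (Fin 2) (Fin 2) ℂ := Matrix.single 0 1 1

/-- `f = E₂₁`. -/
def f : Matrix (Fin 2) (Fin 2) ℂ := Matrix.single 1 0 1

/-- `h = (i/2)(E₁₁ − E₂₂)`. -/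
def h : Matrix (Fin 2) (Fin 2) ℂ :=
  (Complex.I / 2) • (Matrix.single 0 0 1 - Matrix.single 1 1 1)

theorem borel_condition (α : ℂ) :
    ((e + α • h) * (f + (starRingEnd ℂ α) • h) - (f + (starRingEnd ℂ α) • h) * (e + α • h))
      ∈ Submodule.span ℂ
        ({e + α • h, f + (starRingEnd ℂ α) • h, (1 : Matrix (Fin 2) (Fin 2) ℂ)} :
          Set (Matrix (Fin 2) (Fin 2) ℂ))
    ↔ ‖α‖ = 1 := by
  have hI := Complex.I_sq
  constructor
  · intro hm
    rw [show ({e + α • h, f + (starRingEnd ℂ α) • h, (1 : Matrix (Fin 2) (Fin 2) ℂ)} :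
        Set (Matrix (Fin 2) (Fin 2) ℂ)) =
        insert (e + α • h) {f + (starRingEnd ℂ α) • h, (1 : Matrix (Fin 2) (Fin 2) ℂ)} from rfl,
      Submodule.mem_span_insert] at hm
    obtain ⟨c₁, y, hy, hsum⟩ := hm
    rw [Submodule.mem_span_pair] at hy
    obtain ⟨c₂, c₃, rfl⟩ := hy
    have h00 := congrFun (congrFun hsum 0) 0
    have h01 := congrFun (congrFun hsum 0) 1
    have h10 := congrFun (congrFun hsum 1) 0
    have h11 := congrFun (congrFun hsum 1) 1
    simp [e, f, h, Matrix.mul_apply, Fin.sum_univ_two, Matrix.single,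
      Matrix.add_apply, Matrix.sub_apply, Matrix.smul_apply, Matrix.one_apply,
      Fin.ext_iff] at h00 h01 h10 h11
    have key : α * (starRingEnd ℂ α) = 1 := by
      linear_combination (-(1:ℂ)/2) * h00 + (1/2 : ℂ) * h11
        + (α * Complex.I / 2) * h01 + ((starRingEnd ℂ α) * Complex.I / 2) * h10
        + α * (starRingEnd ℂ α) * hI
    have hns : Complex.normSq α = 1 := by
      have hmc := Complex.mul_conj α
      rw [hmc] at key
      exact_mod_cast key
    have h2 := Complex.sq_norm α
    rw [hns] at h2
    nlinarith [norm_nonneg α]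
  · intro habs
    have key : α * (starRingEnd ℂ α) = 1 := by
      rw [Complex.mul_conj, Complex.normSq_eq_norm_sq, habs]; norm_num
    rw [show ({e + α • h, f + (starRingEnd ℂ α) • h, (1 : Matrix (Fin 2) (Fin 2) ℂ)} :
        Set (Matrix (Fin 2) (Fin 2) ℂ)) =
        insert (e + α • h) {f + (starRingEnd ℂ α) • h, (1 : Matrix (Fin 2) (Fin 2) ℂ)} from rfl,
      Submodule.mem_span_insert]
    refine ⟨-(starRingEnd ℂ α) * Complex.I, _, Submodule.mem_span_pair.mpr
      ⟨-α * Complex.I, 0, rfl⟩, ?_⟩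
    ext i j
    fin_cases i <;> fin_cases j <;>
      simp [e, f, h, Matrix.mul_apply, Fin.sum_univ_two, Matrix.single,
        Matrix.add_apply, Matrix.sub_apply, Matrix.smul_apply, Matrix.one_apply] <;>
    first
      | linear_combination (0:ℂ) * key
      | linear_combination (Complex.I^2) * key + hI
      | linear_combination (-Complex.I^2) * key - hI
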